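/- arXiv:0904.4854 — 3 statements merged into one kernel-verified Lean document; each statement's English description precedes it below -/
import Mathlib

section
/- The elements α_{λ;n} := Σ (σ,d), summed over pairs with d ⊆ {1,…,n}, |d| = |λ|, and σ a permutation of d of cycle type λ, form a linear basis of the invariant algebra A_n, indexed by partitions λ with |λ| ≤ n. -/
abbrev PPn (n : ℕ) : Type := {p : Equiv.Perm (Fin n) × Finset (Fin n) // ∀ x ∉ p.2, p.1 x = x}

instance (n : ℕ) : Monoid (PPn n) where
  mul p q := ⟨(p.1.1 * q.1.1, p.1.2 ∪ q.1.2), by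
    intro x hx
    simp only [Finset.mem_union, not_or] at hx
    simp [Equiv.Perm.mul_apply, q.2 x hx.2, p.2 x hx.1]⟩
  one := ⟨(1, ∅), fun x _ => rfl⟩
  mul_assoc p q r := Subtype.ext (Prod.ext (mul_assoc _ _ _) (Finset.union_assoc _ _ _))
  one_mul p := Subtype.ext (Prod.ext (one_mul _) (Finset.empty_union _))
  mul_one p := Subtype.ext (Prod.ext (mul_one _) (Finset.union_empty _))

abbrev Bn (n : ℕ) : Type := MonoidAlgebra ℚ (PPn n)

def ppSwap {n : ℕ} (j i : Fin n) : PPn n := ⟨(Equiv.swap j i, {j, i}), by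
  intro x hx
  simp only [Finset.mem_insert, Finset.mem_singleton, not_or] at hx
  exact Equiv.swap_apply_of_ne_of_ne hx.1 hx.2⟩

noncomputable def xi (n : ℕ) (i : Fin n) : Bn n :=
  ∑ j ∈ Finset.univ.filter (· < i), MonoidAlgebra.of ℚ (PPn n) (ppSwap j i)

/-- The action of `τ ∈ S_n` on partial permutations: `τ·(σ,d) = (τστ⁻¹, τ(d))`. -/
def conjPP {n : ℕ} (τ : Equiv.Perm (Fin n)) (p : PPn n) : PPn n :=
  ⟨(τ * p.1.1 * τ⁻¹, p.1.2.image τ), by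
    intro x hx
    have hx' : τ⁻¹ x ∉ p.1.2 := fun h => hx (Finset.mem_image.mpr ⟨_, h, by simp⟩)
    show τ (p.1.1 (τ⁻¹ x)) = x
    rw [p.2 _ hx']
    simp⟩

/-- `conjPP τ` as a monoid homomorphism. -/
def conjHom {n : ℕ} (τ : Equiv.Perm (Fin n)) : PPn n →* PPn n where
  toFun := conjPP τ
  map_one' := Subtype.ext (Prod.ext (by show τ * 1 * τ⁻¹ = 1; group)
    (by show (∅ : Finset (Fin n)).image τ = ∅; simp))
  map_mul' p q := Subtype.ext (Prod.ext
    (by show τ * (p.1.1 * q.1.1) * τ⁻¹ = (τ * p.1.1 * τ⁻¹) * (τ * q.1.1 * τ⁻¹); group)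
    (by show (p.1.2 ∪ q.1.2).image τ = p.1.2.image τ ∪ q.1.2.image τ;
        exact Finset.image_union _ _))

/-- The invariant subalgebra `A_n` : fixed points of the `S_n`-action on `B_n`. -/
noncomputable def An (n : ℕ) : Subalgebra ℚ (Bn n) where
  carrier := {x | ∀ τ : Equiv.Perm (Fin n),
    MonoidAlgebra.mapDomainAlgHom ℚ ℚ (conjHom τ) x = x}
  add_mem' hx hy := fun τ => by rw [map_add, hx τ, hy τ]
  mul_mem' hx hy := fun τ => by rw [map_mul, hx τ, hy τ]
  algebraMap_mem' c := fun τ => by rw [AlgHom.commutes]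

/-- The cycle type of a partial permutation `(σ,d)`, as a partition of `|d|`
(fixed points of `σ` inside `d` contribute parts equal to `1`). -/
def typePP {n : ℕ} (p : PPn n) : Multiset ℕ :=
  p.1.1.cycleType + Multiset.replicate (p.1.2.card - p.1.1.support.card) 1

/-- The invariant element `α_{λ;n}`: sum of all partial permutations of cycle type `λ`. -/
noncomputable def alphaM (n : ℕ) (m : Multiset ℕ) : Bn n :=
  ∑ p : PPn n, if typePP p = m then MonoidAlgebra.of ℚ (PPn n) p else 0

section AuxLemmas

open Equiv Finset Multiset

variable {n : ℕ}

lemma PPn.ext' {p q : PPn n} (h1 : p.1.1 = q.1.1) (h2 : p.1.2 = q.1.2) : p = q :=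
  Subtype.ext (Prod.ext h1 h2)

lemma support_subset_dom (p : PPn n) : p.1.1.support ⊆ p.1.2 := fun x hx => by
  by_contra h
  exact (Equiv.Perm.mem_support.mp hx) (p.2 x h)

lemma conjPP_conjPP (τ τ' : Equiv.Perm (Fin n)) (p : PPn n) :
    conjPP τ (conjPP τ' p) = conjPP (τ * τ') p := by
  apply PPn.ext'
  · show τ * (τ' * p.1.1 * τ'⁻¹) * τ⁻¹ = (τ * τ') * p.1.1 * (τ * τ')⁻¹
    group
  · show (p.1.2.image τ').image τ = p.1.2.image (τ * τ')
    rw [Finset.image_image]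
    rfl

lemma conjPP_one (p : PPn n) : conjPP 1 p = p := by
  apply PPn.ext'
  · show 1 * p.1.1 * 1⁻¹ = p.1.1
    group
  · show p.1.2.image (1 : Equiv.Perm (Fin n)) = p.1.2
    simp

lemma conjPP_inv_conjPP (τ : Equiv.Perm (Fin n)) (p : PPn n) :
    conjPP τ⁻¹ (conjPP τ p) = p := by
  rw [conjPP_conjPP, inv_mul_cancel, conjPP_one]

lemma conjPP_conjPP_inv (τ : Equiv.Perm (Fin n)) (p : PPn n) :
    conjPP τ (conjPP τ⁻¹ p) = p := by
  rw [conjPP_conjPP, mul_inv_cancel, conjPP_one]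

lemma conjPP_injective (τ : Equiv.Perm (Fin n)) :
    Function.Injective (conjPP τ : PPn n → PPn n) :=
  Function.LeftInverse.injective (conjPP_inv_conjPP τ)

lemma typePP_conjPP (τ : Equiv.Perm (Fin n)) (p : PPn n) :
    typePP (conjPP τ p) = typePP p := by
  show (τ * p.1.1 * τ⁻¹).cycleType +
      Multiset.replicate ((p.1.2.image τ).card - (τ * p.1.1 * τ⁻¹).support.card) 1 = _
  rw [Equiv.Perm.cycleType_conj, Equiv.Perm.support_conj, Finset.card_map,
    Finset.card_image_of_injective _ τ.injective]
  rfl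

lemma sum_typePP (p : PPn n) : (typePP p).sum = p.1.2.card := by
  have h := Finset.card_le_card (support_subset_dom p)
  rw [typePP, Multiset.sum_add, Equiv.Perm.sum_cycleType, Multiset.sum_replicate,
    smul_eq_mul, mul_one]
  omega

lemma pos_of_mem_typePP (p : PPn n) : ∀ a ∈ typePP p, 0 < a := by
  intro a ha
  rcases Multiset.mem_add.mp ha with h | h
  · exact lt_of_lt_of_le two_pos (Equiv.Perm.two_le_of_mem_cycleType h)
  · rw [Multiset.eq_of_mem_replicate h]; norm_num

lemma typePP_valid (p : PPn n) : (∀ a ∈ typePP p, 0 < a) ∧ (typePP p).sum ≤ n :=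
  ⟨pos_of_mem_typePP p, by
    rw [sum_typePP]
    simpa using Finset.card_le_univ p.1.2⟩

lemma cycleType_eq_of_typePP_eq {p q : PPn n} (h : typePP p = typePP q) :
    p.1.1.cycleType = q.1.1.cycleType := by
  have key : ∀ r : PPn n, (typePP r).filter (fun a => 2 ≤ a) = r.1.1.cycleType := by
    intro r
    rw [typePP, Multiset.filter_add,
      Multiset.filter_eq_self.mpr (fun a ha => Equiv.Perm.two_le_of_mem_cycleType ha),
      Multiset.filter_eq_nil.mpr, add_zero]
    intro a ha
    rw [Multiset.eq_of_mem_replicate ha]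
    omega
  rw [← key p, ← key q, h]

lemma exists_conjPP_eq {p q : PPn n} (h : typePP p = typePP q) :
    ∃ τ : Equiv.Perm (Fin n), conjPP τ p = q := by
  classical
  have hct := cycleType_eq_of_typePP_eq h
  have hcard : p.1.2.card = q.1.2.card := by rw [← sum_typePP, ← sum_typePP, h]
  obtain ⟨c, hc⟩ := isConj_iff.mp (Equiv.Perm.isConj_of_cycleType_eq hct)
  set S := q.1.1.support with hS
  set D₁ := p.1.2.image c with hD₁
  have hSD₁ : S ⊆ D₁ := by
    rw [hS, ← hc, Equiv.Perm.support_conj]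
    intro x hx
    rw [Finset.mem_map] at hx
    obtain ⟨y, hy, rfl⟩ := hx
    exact Finset.mem_image_of_mem _ (support_subset_dom p hy)
  have hSD₂ : S ⊆ q.1.2 := support_subset_dom q
  have hD12 : D₁.card = q.1.2.card := by
    rw [hD₁, Finset.card_image_of_injective _ c.injective]; exact hcard
  have hsd : (D₁ \ S).card = (q.1.2 \ S).card := by
    rw [Finset.card_sdiff_of_subset hSD₁, Finset.card_sdiff_of_subset hSD₂, hD12]
  let eA : {t : {x : Fin n // ¬ x ∈ S} // (t : Fin n) ∈ D₁} ≃ {x : Fin n // x ∈ D₁ \ S} :=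
    (Equiv.subtypeSubtypeEquivSubtypeInter _ _).trans
      (Equiv.subtypeEquivRight (fun x => by simp [Finset.mem_sdiff, and_comm]))
  let eB : {t : {x : Fin n // ¬ x ∈ S} // (t : Fin n) ∈ q.1.2} ≃ {x : Fin n // x ∈ q.1.2 \ S} :=
    (Equiv.subtypeSubtypeEquivSubtypeInter _ _).trans
      (Equiv.subtypeEquivRight (fun x => by simp [Finset.mem_sdiff, and_comm]))
  have hcards : Fintype.card {x : Fin n // x ∈ D₁ \ S} = Fintype.card {x : Fin n // x ∈ q.1.2 \ S} :=
    (Fintype.card_coe _).trans (hsd.trans (Fintype.card_coe _).symm)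
  let e₀ : {t : {x : Fin n // ¬ x ∈ S} // (t : Fin n) ∈ D₁} ≃
      {t : {x : Fin n // ¬ x ∈ S} // (t : Fin n) ∈ q.1.2} :=
    eA.trans ((Fintype.equivOfCardEq hcards).trans eB.symm)
  let π : Equiv.Perm {x : Fin n // ¬ x ∈ S} := Equiv.extendSubtype e₀
  let ρ : Equiv.Perm (Fin n) :=
    Equiv.Perm.subtypeCongr (Equiv.refl {x : Fin n // x ∈ S}) π
  have hρ_mem : ∀ x ∈ S, ρ x = x := by
    intro x hx
    rw [Equiv.Perm.subtypeCongr.left_apply _ _ hx]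
    rfl
  have hρ_not : ∀ (x : Fin n) (hx : ¬ x ∈ S), ρ x = ↑(π ⟨x, hx⟩) := by
    intro x hx
    exact Equiv.Perm.subtypeCongr.right_apply _ _ hx
  have hρ_not_mem : ∀ x, ¬ x ∈ S → ¬ ρ x ∈ S := by
    intro x hx
    rw [hρ_not x hx]
    exact (π ⟨x, hx⟩).2
  have hρ_D : ∀ (x : Fin n) (hx : ¬ x ∈ S), (x ∈ D₁ ↔ ρ x ∈ q.1.2) := by
    intro x hx
    rw [hρ_not x hx]
    constructor
    · intro h1
      exact Equiv.extendSubtype_mem e₀ ⟨x, hx⟩ h1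
    · intro h2
      by_contra h1
      exact Equiv.extendSubtype_not_mem e₀ ⟨x, hx⟩ h1 h2
  have hcomm : ρ * q.1.1 = q.1.1 * ρ := by
    apply Equiv.ext
    intro x
    simp only [Equiv.Perm.mul_apply]
    by_cases hx : x ∈ S
    · have h1 : q.1.1 x ∈ S := Equiv.Perm.apply_mem_support.mpr hx
      rw [hρ_mem _ h1, hρ_mem _ hx]
    · have h1 : q.1.1 x = x := Equiv.Perm.notMem_support.mp hx
      rw [h1, Equiv.Perm.notMem_support.mp (hρ_not_mem x hx)]
  refine ⟨ρ * c, PPn.ext' ?_ ?_⟩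
  · show (ρ * c) * p.1.1 * (ρ * c)⁻¹ = q.1.1
    have h1 : (ρ * c) * p.1.1 * (ρ * c)⁻¹ = ρ * (c * p.1.1 * c⁻¹) * ρ⁻¹ := by group
    rw [h1, hc, hcomm]
    group
  · show p.1.2.image (⇑(ρ * c)) = q.1.2
    have himg : p.1.2.image (⇑(ρ * c)) = D₁.image ρ := by
      rw [hD₁, Finset.image_image]
      rfl
    rw [himg]
    apply Finset.eq_of_subset_of_card_le
    · intro x hx
      rw [Finset.mem_image] at hx
      obtain ⟨y, hy, rfl⟩ := hx
      by_cases hyS : y ∈ S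
      · rw [hρ_mem y hyS]; exact hSD₂ hyS
      · exact (hρ_D y hyS).mp hy
    · rw [Finset.card_image_of_injective _ ρ.injective]
      exact hD12.ge

lemma exists_typePP (m : Multiset ℕ) (hpos : ∀ a ∈ m, 0 < a) (hsum : m.sum ≤ n) :
    ∃ p : PPn n, typePP p = m := by
  classical
  set m₂ := m.filter (fun a => 2 ≤ a) with hm₂
  set m₁ := m.filter (fun a => ¬ 2 ≤ a) with hm₁def
  have hsplit : m₂ + m₁ = m := Multiset.filter_add_not _ m
  have hm₁1 : m₁ = Multiset.replicate (Multiset.card m₁) 1 := by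
    rw [Multiset.eq_replicate_card]
    intro b hb
    have h1 := Multiset.of_mem_filter hb
    have h2 := hpos b (Multiset.mem_of_mem_filter hb)
    omega
  have hm₁sum : m₁.sum = Multiset.card m₁ := by
    conv_lhs => rw [hm₁1]
    rw [Multiset.sum_replicate, smul_eq_mul, mul_one]
  have hs2 : m₂.sum + Multiset.card m₁ = m.sum := by
    rw [← hm₁sum, ← Multiset.sum_add, hsplit]
  have hm2n : m₂.sum ≤ Fintype.card (Fin n) := by
    rw [Fintype.card_fin]
    omega
  obtain ⟨σ, hσ⟩ := (Equiv.Perm.exists_with_cycleType_iff (Fin n) (m := m₂)).mpr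
    ⟨hm2n, fun a ha => Multiset.of_mem_filter ha⟩
  have hsupp : σ.support.card = m₂.sum := by rw [← Equiv.Perm.sum_cycleType, hσ]
  obtain ⟨u, hsu, -, hucard⟩ := Finset.exists_subsuperset_card_eq
    (s := σ.support) (t := Finset.univ) (n := m.sum)
    (Finset.subset_univ σ.support) (by rw [hsupp]; omega)
    (by simpa using hsum)
  refine ⟨⟨(σ, u), fun x hx => ?_⟩, ?_⟩
  · exact Equiv.Perm.notMem_support.mp (fun hmem => hx (hsu hmem))
  · show σ.cycleType + Multiset.replicate (u.card - σ.support.card) 1 = m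
    rw [hσ, hucard, hsupp]
    have hms : m.sum - m₂.sum = Multiset.card m₁ := by omega
    rw [hms, ← hm₁1, hsplit]

lemma alphaM_apply (m : Multiset ℕ) (q : PPn n) :
    (alphaM n m).coeff q = if typePP q = m then 1 else 0 := by
  classical
  rw [alphaM, MonoidAlgebra.coeff_sum, Finset.sum_apply']
  have hterm : ∀ p : PPn n,
      ((if typePP p = m then MonoidAlgebra.of ℚ (PPn n) p else 0) : Bn n).coeff q
        = if p = q then (if typePP q = m then (1:ℚ) else 0) else 0 := by
    intro p
    by_cases hpq : p = q
    · subst hpq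
      by_cases ht : typePP p = m
      · simp [ht, MonoidAlgebra.of_apply, MonoidAlgebra.coeff_single_apply]
      · simp [ht]
    · by_cases ht : typePP p = m
      · simp [ht, hpq, MonoidAlgebra.of_apply, MonoidAlgebra.coeff_single_apply]
      · simp [ht, hpq]
  rw [Finset.sum_congr rfl (fun p _ => hterm p), Finset.sum_ite_eq' Finset.univ q]
  simp

lemma mapDomainAlgHom_eq (τ : Equiv.Perm (Fin n)) (x : Bn n) :
    ((MonoidAlgebra.mapDomainAlgHom ℚ ℚ (conjHom τ)) x).coeff = Finsupp.mapDomain (conjPP τ) x.coeff := rfl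

lemma mapDomain_alphaM (τ : Equiv.Perm (Fin n)) (m : Multiset ℕ) :
    (MonoidAlgebra.mapDomainAlgHom ℚ ℚ (conjHom τ)) (alphaM n m) = alphaM n m := by
  classical
  apply MonoidAlgebra.coeff_injective
  rw [mapDomainAlgHom_eq]
  apply Finsupp.ext
  intro q
  have hq : q = conjPP τ (conjPP τ⁻¹ q) := (conjPP_conjPP_inv τ q).symm
  rw [hq, Finsupp.mapDomain_apply (conjPP_injective τ), alphaM_apply, alphaM_apply]
  simp [typePP_conjPP]

lemma invariant_apply_conj {x : Bn n}
    (hx : ∀ τ, (MonoidAlgebra.mapDomainAlgHom ℚ ℚ (conjHom τ)) x = x)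
    (τ : Equiv.Perm (Fin n)) (p : PPn n) : x.coeff (conjPP τ p) = x.coeff p := by
  have h := Finsupp.mapDomain_apply (conjPP_injective τ) x.coeff p
  rw [show Finsupp.mapDomain (conjPP τ) x.coeff = x.coeff from
    (mapDomainAlgHom_eq τ x).symm.trans (congrArg MonoidAlgebra.coeff (hx τ))] at h
  exact h

end AuxLemmas

/-- the `α_{λ;n}`, for `λ` a partition with `|λ| ≤ n`, form a linear basis of
the invariant algebra `A_n`. -/
theorem alpha_basis (n : ℕ) :
    LinearIndependent ℚ
      (fun m : {m : Multiset ℕ // (∀ a ∈ m, 0 < a) ∧ m.sum ≤ n} => alphaM n m.1) ∧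
    Submodule.span ℚ
      (Set.range fun m : {m : Multiset ℕ // (∀ a ∈ m, 0 < a) ∧ m.sum ≤ n} => alphaM n m.1)
      = Subalgebra.toSubmodule (An n) := by
  classical
  constructor
  · -- linear independence
    set T : Bn n →ₗ[ℚ] (Multiset ℕ →₀ ℚ) :=
      (Finsupp.lmapDomain ℚ ℚ typePP).comp (MonoidAlgebra.coeffLinearEquiv ℚ).toLinearMap with hT
    have hfib : ∀ m : {m : Multiset ℕ // (∀ a ∈ m, 0 < a) ∧ m.sum ≤ n},
        (Finset.univ.filter (fun p : PPn n => typePP p = m.1)).card ≠ 0 := by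
      intro m
      obtain ⟨p, hp⟩ := exists_typePP m.1 m.2.1 m.2.2
      exact Finset.card_ne_zero_of_mem (Finset.mem_filter.mpr ⟨Finset.mem_univ p, hp⟩)
    have hTα : ∀ m : {m : Multiset ℕ // (∀ a ∈ m, 0 < a) ∧ m.sum ≤ n},
        T (alphaM n m.1) =
          (((Finset.univ.filter (fun p : PPn n => typePP p = m.1)).card : ℚ)) •
            Finsupp.single m.1 (1:ℚ) := by
      intro m
      rw [alphaM, map_sum]
      have hterm : ∀ p : PPn n,
          T (if typePP p = m.1 then MonoidAlgebra.of ℚ (PPn n) p else 0)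
            = if typePP p = m.1 then Finsupp.single m.1 (1:ℚ) else 0 := by
        intro p
        by_cases hcond : typePP p = m.1
        · rw [if_pos hcond, if_pos hcond, hT]
          show Finsupp.mapDomain typePP (Finsupp.single p (1:ℚ)) = _
          rw [Finsupp.mapDomain_single, hcond]
        · rw [if_neg hcond, if_neg hcond, map_zero]
      rw [Finset.sum_congr rfl (fun p _ => hterm p), ← Finset.sum_filter,
        Finset.sum_const, Nat.cast_smul_eq_nsmul]
    have hb : LinearIndependent ℚ (fun i : Multiset ℕ => Finsupp.single i (1:ℚ)) := by
      have h := (Finsupp.basisSingleOne (R := ℚ) (ι := Multiset ℕ)).linearIndependent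
      rwa [Finsupp.coe_basisSingleOne] at h
    have hli := hb.comp
      (Subtype.val : {m : Multiset ℕ // (∀ a ∈ m, 0 < a) ∧ m.sum ≤ n} → Multiset ℕ)
      Subtype.val_injective
    let w : {m : Multiset ℕ // (∀ a ∈ m, 0 < a) ∧ m.sum ≤ n} → ℚˣ := fun m =>
      Units.mk0 _ (Nat.cast_ne_zero (R := ℚ).mpr (hfib m))
    have hws := hli.units_smul w
    apply LinearIndependent.of_comp T
    have hfun : (⇑T ∘ fun m : {m : Multiset ℕ // (∀ a ∈ m, 0 < a) ∧ m.sum ≤ n} => alphaM n m.1)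
        = w • (fun m : {m : Multiset ℕ // (∀ a ∈ m, 0 < a) ∧ m.sum ≤ n} =>
            Finsupp.single m.1 (1:ℚ)) := by
      funext m
      simp only [Function.comp_apply, Pi.smul_apply', Units.smul_def]
      rw [hTα m]
      rfl
    rw [hfun]
    exact hws
  · -- span
    apply le_antisymm
    · rw [Submodule.span_le]
      rintro _ ⟨m, rfl⟩
      rw [SetLike.mem_coe, Subalgebra.mem_toSubmodule]
      exact fun τ => mapDomain_alphaM τ m.1
    · intro x hx
      rw [Subalgebra.mem_toSubmodule] at hx
      have hx' : ∀ τ, (MonoidAlgebra.mapDomainAlgHom ℚ ℚ (conjHom τ)) x = x := hx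
      clear hx
      have key : ∀ (N : ℕ) (x : Bn n), x.coeff.support.card ≤ N →
          (∀ τ, (MonoidAlgebra.mapDomainAlgHom ℚ ℚ (conjHom τ)) x = x) →
          x ∈ Submodule.span ℚ
            (Set.range fun m : {m : Multiset ℕ // (∀ a ∈ m, 0 < a) ∧ m.sum ≤ n} =>
              alphaM n m.1) := by
        intro N
        induction N with
        | zero =>
          intro x hcard _
          have hx0 : x = 0 := by
            rwa [Nat.le_zero, Finset.card_eq_zero, Finsupp.support_eq_empty, MonoidAlgebra.coeff_eq_zero] at hcard
          simp [hx0]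
        | succ N ih =>
          intro x hcard hinv
          by_cases hx0 : x = 0
          · simp [hx0]
          · obtain ⟨p, hp⟩ := Finsupp.support_nonempty_iff.mpr (MonoidAlgebra.coeff_eq_zero.not.mpr hx0)
            set m : Multiset ℕ := typePP p with hm
            have hval := typePP_valid p
            set y : Bn n := x - x.coeff p • alphaM n m with hy
            have hyinv : ∀ τ, (MonoidAlgebra.mapDomainAlgHom ℚ ℚ (conjHom τ)) y = y := by
              intro τ
              rw [hy, map_sub, map_smul, hinv τ, mapDomain_alphaM τ m]
            have hconst : ∀ q : PPn n, typePP q = m → x.coeff q = x.coeff p := by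
              intro q hq
              obtain ⟨τ, hτ⟩ := exists_conjPP_eq (p := p) (q := q)
                (by rw [hm] at hq; exact hq.symm)
              rw [← hτ]
              exact invariant_apply_conj hinv τ p
            have hyapp : ∀ q : PPn n, y.coeff q = x.coeff q - x.coeff p * (if typePP q = m then 1 else 0) := by
              intro q
              rw [hy, MonoidAlgebra.coeff_sub, Finsupp.sub_apply, MonoidAlgebra.coeff_smul, Finsupp.smul_apply,
                  alphaM_apply, smul_eq_mul]
            have hysupp : y.coeff.support ⊆ x.coeff.support.erase p := by
              intro q hq
              rw [Finsupp.mem_support_iff] at hq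
              have htq : typePP q ≠ m := by
                intro ht
                apply hq
                rw [hyapp q, if_pos ht, mul_one, hconst q ht, sub_self]
              rw [Finset.mem_erase]
              refine ⟨fun hqp => htq (hqp ▸ hm.symm), Finsupp.mem_support_iff.mpr ?_⟩
              rw [hyapp q, if_neg htq, mul_zero, sub_zero] at hq
              exact hq
            have hycard : y.coeff.support.card ≤ N := by
              have h1 : (x.coeff.support.erase p).card < x.coeff.support.card :=
                Finset.card_erase_lt_of_mem hp
              have h2 := Finset.card_le_card hysupp
              omega
            have hyspan := ih y hycard hyinv
            have hx_eq : x = y + x.coeff p • alphaM n m := eq_add_of_sub_eq hy.symm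
            rw [hx_eq]
            exact Submodule.add_mem _ hyspan
              (Submodule.smul_mem _ _ (Submodule.subset_span ⟨⟨m, hval⟩, rfl⟩))
      exact key _ x le_rfl hx'
end

section
/- The image of α_{λ;n} under the forgetful homomorphism For_n : B_n → ℚ[S_n] equals binom(n−|λ|+m_1(λ), m_1(λ)) · C_{λ1^{n−|λ|}}, where m_1(λ) is the number of parts of λ equal to 1 and C_μ denotes the sum in ℚ[S_n] of all permutations of cycle type μ. -/
/-- The projection `(σ,d) ↦ σ`, as a monoid homomorphism. -/
def projHom (n : ℕ) : PPn n →* Equiv.Perm (Fin n) where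
  toFun p := p.1.1
  map_one' := rfl
  map_mul' _ _ := rfl

/-- The forgetful algebra homomorphism `For_n : B_n → ℚ[S_n]`. -/
noncomputable def Forn (n : ℕ) : Bn n →ₐ[ℚ] MonoidAlgebra ℚ (Equiv.Perm (Fin n)) :=
  MonoidAlgebra.lift ℚ (MonoidAlgebra ℚ (Equiv.Perm (Fin n))) (PPn n)
    ((MonoidAlgebra.of ℚ (Equiv.Perm (Fin n))).comp (projHom n))

/-- The cycle type of `σ ∈ S_n` as a partition of `n` (including parts `1` for fixed points). -/
def fullType {n : ℕ} (σ : Equiv.Perm (Fin n)) : Multiset ℕ :=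
  σ.cycleType + Multiset.replicate (n - σ.support.card) 1

/-- The class sum `C_μ`: sum of all permutations of cycle type `μ` in `ℚ[S_n]`. -/
noncomputable def Csum (n : ℕ) (m : Multiset ℕ) : MonoidAlgebra ℚ (Equiv.Perm (Fin n)) :=
  ∑ σ : Equiv.Perm (Fin n),
    if fullType σ = m then MonoidAlgebra.of ℚ (Equiv.Perm (Fin n)) σ else 0

section Aux

open Finset Equiv

variable {n k : ℕ}

lemma cycleType_filter_ne_one (σ : Equiv.Perm (Fin n)) :
    σ.cycleType.filter (fun a => a ≠ 1) = σ.cycleType :=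
  Multiset.filter_eq_self.mpr (fun a ha => by
    have := Equiv.Perm.two_le_of_mem_cycleType ha; omega)

lemma cycleType_count_one (σ : Equiv.Perm (Fin n)) : σ.cycleType.count 1 = 0 :=
  Multiset.count_eq_zero.mpr (fun h => by
    have := Equiv.Perm.two_le_of_mem_cycleType h; omega)

lemma replicate_filter_ne_one (r : ℕ) :
    (Multiset.replicate r 1).filter (fun a : ℕ => a ≠ 1) = 0 :=
  Multiset.filter_eq_nil.mpr (fun a ha h => h (Multiset.eq_of_mem_replicate ha))

lemma supset_count (s : Finset (Fin n)) (hs : s.card ≤ k) :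
    ((Finset.univ.filter fun d : Finset (Fin n) => s ⊆ d ∧ d.card = k)).card
      = (n - s.card).choose (k - s.card) := by
  have hsu : s.card ≤ n := le_trans (Finset.card_le_card (Finset.subset_univ s)) (by simp)
  have h2 : (n - s.card).choose (k - s.card)
      = (Finset.powersetCard (k - s.card) (Finset.univ \ s)).card := by
    rw [Finset.card_powersetCard, Finset.card_sdiff_of_subset (Finset.subset_univ s),
      Finset.card_univ, Fintype.card_fin]
  rw [h2]
  · apply Finset.card_bij' (fun d _ => d \ s) (fun e _ => e ∪ s)
    · intro d hd
      simp only [Finset.mem_filter, Finset.mem_univ, true_and] at hd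
      rw [Finset.mem_powersetCard]
      exact ⟨Finset.sdiff_subset_sdiff (Finset.subset_univ d) le_rfl,
        by rw [Finset.card_sdiff_of_subset hd.1, hd.2]⟩
    · intro e he
      rw [Finset.mem_powersetCard] at he
      have hdisj : Disjoint e s := Finset.disjoint_left.mpr
        (fun a ha => (Finset.mem_sdiff.mp (he.1 ha)).2)
      simp only [Finset.mem_filter, Finset.mem_univ, true_and]
      refine ⟨Finset.subset_union_right, ?_⟩
      rw [Finset.card_union_of_disjoint hdisj, he.2]
      omega
    · intro d hd
      simp only [Finset.mem_filter, Finset.mem_univ, true_and] at hd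
      exact Finset.sdiff_union_of_subset hd.1
    · intro e he
      rw [Finset.mem_powersetCard] at he
      exact Finset.union_sdiff_cancel_right (Finset.disjoint_left.mpr
        (fun a ha => (Finset.mem_sdiff.mp (he.1 ha)).2))

end Aux

/-- `For_n(α_{λ;n}) = binom(n−|λ|+m₁(λ), m₁(λ)) · C_{λ 1^{n−|λ|}}`. -/
theorem Forn_alpha (n k : ℕ) (hk : k ≤ n) (lam : Multiset ℕ)
    (hpos : ∀ a ∈ lam, 0 < a) (hsum : lam.sum = k) :
    Forn n (alphaM n lam)
      = ((n - k + lam.count 1).choose (lam.count 1) : ℚ)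
          • Csum n (lam + Multiset.replicate (n - k) 1) := by
  classical
  set m₁ := lam.count 1 with hm₁
  set lamBig := lam.filter (fun a => a ≠ 1) with hlamBig
  have hdecomp : lamBig + Multiset.replicate m₁ 1 = lam := by
    conv_rhs => rw [← Multiset.filter_add_not (fun a => a ≠ 1) lam]
    congr 1
    rw [Multiset.filter_congr (q := fun a : ℕ => a = 1) (fun a _ => by simp),
      Multiset.filter_eq' lam 1]
  have hsum' : lamBig.sum + m₁ = k := by
    have := congrArg Multiset.sum hdecomp
    rw [Multiset.sum_add, Multiset.sum_replicate, smul_eq_mul, mul_one, hsum] at this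
    exact this
  have hm₁k : m₁ ≤ k := by omega
  -- key equivalence A
  have keyA : ∀ (σ : Equiv.Perm (Fin n)) (d : Finset (Fin n)), σ.support ⊆ d →
      (σ.cycleType + Multiset.replicate (d.card - σ.support.card) 1 = lam ↔
        σ.cycleType = lamBig ∧ d.card = k) := by
    intro σ d hsd
    have hsc : σ.support.card ≤ d.card := Finset.card_le_card hsd
    have hsum_ct : σ.cycleType.sum = σ.support.card := Equiv.Perm.sum_cycleType σ
    constructor
    · intro h
      have h1 : σ.cycleType = lamBig := by
        have := congrArg (Multiset.filter (fun a => a ≠ 1)) h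
        rwa [Multiset.filter_add, cycleType_filter_ne_one, replicate_filter_ne_one,
          add_zero] at this
      have h2 : d.card - σ.support.card = m₁ := by
        have := congrArg (Multiset.count 1) h
        rwa [Multiset.count_add, cycleType_count_one, Multiset.count_replicate_self,
          zero_add] at this
      have h3 : σ.support.card = lamBig.sum := by rw [← hsum_ct, h1]
      exact ⟨h1, by omega⟩
    · rintro ⟨h1, h2⟩
      have h3 : σ.support.card = lamBig.sum := by rw [← hsum_ct, h1]
      rw [h1, show d.card - σ.support.card = m₁ by omega, hdecomp]
  -- key equivalence B
  have keyB : ∀ σ : Equiv.Perm (Fin n),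
      (fullType σ = lam + Multiset.replicate (n - k) 1 ↔ σ.cycleType = lamBig) := by
    intro σ
    have hsum_ct : σ.cycleType.sum = σ.support.card := Equiv.Perm.sum_cycleType σ
    have hsn : σ.support.card ≤ n := by
      have := Finset.card_le_card (Finset.subset_univ σ.support)
      rwa [Finset.card_univ, Fintype.card_fin] at this
    have hrhs : lam + Multiset.replicate (n - k) 1
        = lamBig + Multiset.replicate (m₁ + (n - k)) 1 := by
      rw [← hdecomp, Multiset.replicate_add, add_assoc]
    rw [hrhs, fullType]
    constructor
    · intro h
      have := congrArg (Multiset.filter (fun a => a ≠ 1)) h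
      rwa [Multiset.filter_add, Multiset.filter_add, cycleType_filter_ne_one,
        replicate_filter_ne_one, replicate_filter_ne_one,
        show lamBig.filter (fun a => a ≠ 1) = lamBig from Multiset.filter_eq_self.mpr
          (fun a ha => (Multiset.mem_filter.mp ha).2), add_zero, add_zero] at this
    · intro h1
      have h3 : σ.support.card = lamBig.sum := by rw [← hsum_ct, h1]
      rw [h1, show n - σ.support.card = m₁ + (n - k) by omega]
  -- rewrite LHS
  have hFof : ∀ p : PPn n, Forn n (MonoidAlgebra.of ℚ (PPn n) p)
      = MonoidAlgebra.of ℚ (Equiv.Perm (Fin n)) p.1.1 := fun p => by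
    rw [Forn, MonoidAlgebra.lift_of]; rfl
  rw [alphaM, map_sum]
  simp only [apply_ite (Forn n), map_zero, hFof]
  -- from subtype sum to product sum
  have hsub : (∑ p : PPn n, if typePP p = lam then
        MonoidAlgebra.of ℚ (Equiv.Perm (Fin n)) p.1.1 else 0)
      = ∑ q ∈ Finset.univ.filter (fun q : Equiv.Perm (Fin n) × Finset (Fin n) =>
          ∀ x ∉ q.2, q.1 x = x),
        (if q.1.cycleType + Multiset.replicate (q.2.card - q.1.support.card) 1 = lam
          then MonoidAlgebra.of ℚ (Equiv.Perm (Fin n)) q.1 else 0) := by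
    have h := Finset.sum_subtype_eq_sum_filter
      (s := (Finset.univ : Finset (Equiv.Perm (Fin n) × Finset (Fin n))))
      (fun q => (if q.1.cycleType + Multiset.replicate (q.2.card - q.1.support.card) 1 = lam
        then MonoidAlgebra.of ℚ (Equiv.Perm (Fin n)) q.1 else 0))
      (p := fun q => ∀ x ∉ q.2, q.1 x = x)
    rw [Finset.subtype_univ] at h
    exact (Finset.sum_congr rfl fun p _ => rfl).trans h
  rw [hsub, Finset.sum_filter, Fintype.sum_prod_type]
  rw [Csum, Finset.smul_sum]
  apply Finset.sum_congr rfl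
  intro σ _
  have hPP : ∀ d : Finset (Fin n), (∀ x ∉ d, σ x = x) ↔ σ.support ⊆ d := by
    intro d
    constructor
    · intro h x hx
      by_contra hxd
      exact (Equiv.Perm.mem_support.mp hx) (h x hxd)
    · intro h x hxd
      by_contra hfx
      exact hxd (h (Equiv.Perm.mem_support.mpr hfx))
  have step : ∀ d : Finset (Fin n),
      (if (∀ x ∉ d, σ x = x) then
        (if σ.cycleType + Multiset.replicate (d.card - σ.support.card) 1 = lam
          then MonoidAlgebra.of ℚ (Equiv.Perm (Fin n)) σ else 0) else 0)
      = (if σ.support ⊆ d ∧ d.card = k ∧ σ.cycleType = lamBig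
          then MonoidAlgebra.of ℚ (Equiv.Perm (Fin n)) σ else 0) := by
    intro d
    rw [← ite_and]
    apply if_congr _ rfl rfl
    rw [hPP d]
    constructor
    · rintro ⟨h1, h2⟩
      obtain ⟨ha, hb⟩ := (keyA σ d h1).mp h2
      exact ⟨h1, hb, ha⟩
    · rintro ⟨h1, h2, h3⟩
      exact ⟨h1, (keyA σ d h1).mpr ⟨h3, h2⟩⟩
  simp only [step]
  rw [smul_ite, smul_zero]
  by_cases hcyc : σ.cycleType = lamBig
  · simp only [hcyc, and_true, (keyB σ).mpr hcyc, if_true]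
    rw [← Finset.sum_filter, Finset.sum_const]
    have hcard : σ.support.card = k - m₁ := by
      have := Equiv.Perm.sum_cycleType σ
      rw [hcyc] at this; omega
    rw [supset_count σ.support (by omega), hcard,
      show n - (k - m₁) = n - k + m₁ by omega, show k - (k - m₁) = m₁ by omega,
      Nat.cast_smul_eq_nsmul]
  · simp only [hcyc, and_false, if_false, Finset.sum_const_zero]
    rw [if_neg (fun h => hcyc ((keyB σ).mp h))]
end

section
/- In ℚ[S_{n+1}], let E : ℚ[S_{n+1}] → ℚ[S_n] be the linear map with E(σ) = σ restricted to {1,…,n} if σ(n+1) = n+1 and E(σ) = 0 otherwise. Then for every r ≥ 0, M_n^r := E(X_{n+1}^r) is a central element of ℚ[S_n], where X_{n+1} = (1 n+1) + ⋯ + (n n+1). -/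
/-- The group algebra `ℚ[S_m]`. -/
abbrev QSn (m : ℕ) : Type := MonoidAlgebra ℚ (Equiv.Perm (Fin m))

/-- Restriction to `{1,…,n}` of a permutation of `{1,…,n+1}` (meaningful when it fixes the
last point). -/
noncomputable def restrictLast (n : ℕ) (σ : Equiv.Perm (Fin (n + 1))) : Equiv.Perm (Fin n) :=
  Equiv.removeNone ((finSuccEquivLast (n := n)).permCongr σ)

/-- The linear map `E : ℚ[S_{n+1}] → ℚ[S_n]`, `σ ↦ σ|_{{1,…,n}}` if `σ(n+1) = n+1`, else `0`. -/
noncomputable def Emap (n : ℕ) : QSn (n + 1) →ₗ[ℚ] QSn n :=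
  (MonoidAlgebra.coeffLinearEquiv ℚ).symm.toLinearMap ∘ₗ (Finsupp.lsum ℚ fun σ =>
    if σ (Fin.last n) = Fin.last n then Finsupp.lsingle (restrictLast n σ) else 0) ∘ₗ
    (MonoidAlgebra.coeffLinearEquiv ℚ).toLinearMap

/-- The Jucys-Murphy element `X_{n+1} = (1 n+1) + ⋯ + (n n+1)`. -/
noncomputable def XJM (n : ℕ) : QSn (n + 1) :=
  ∑ j : Fin n, MonoidAlgebra.of ℚ (Equiv.Perm (Fin (n + 1))) (Equiv.swap j.castSucc (Fin.last n))

/-- Lift of a permutation of `Fin n` to `Fin (n+1)` fixing the last point. -/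
noncomputable def liftLast (n : ℕ) (π : Equiv.Perm (Fin n)) : Equiv.Perm (Fin (n + 1)) :=
  (finSuccEquivLast (n := n)).permCongr.symm π.optionCongr

lemma liftLast_castSucc (n : ℕ) (π : Equiv.Perm (Fin n)) (i : Fin n) :
    liftLast n π i.castSucc = (π i).castSucc := by
  simp [liftLast, Equiv.permCongr_apply, finSuccEquivLast_castSucc]

lemma liftLast_last (n : ℕ) (π : Equiv.Perm (Fin n)) :
    liftLast n π (Fin.last n) = Fin.last n := by
  simp [liftLast, Equiv.permCongr_apply, finSuccEquivLast_last]

lemma restrictLast_castSucc (n : ℕ) (σ : Equiv.Perm (Fin (n + 1)))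
    (hσ : σ (Fin.last n) = Fin.last n) (i : Fin n) :
    (restrictLast n σ i).castSucc = σ i.castSucc := by
  have hne : σ i.castSucc ≠ Fin.last n := by
    intro h
    exact absurd (σ.injective (h.trans hσ.symm)) (Fin.castSucc_lt_last i).ne
  obtain ⟨j, hj⟩ := Fin.exists_castSucc_eq.mpr hne
  have h1 : ((finSuccEquivLast (n := n)).permCongr σ) (some i) = some j := by
    simp [Equiv.permCongr_apply, ← hj, finSuccEquivLast_castSucc]
  have h2 := Equiv.removeNone_some ((finSuccEquivLast (n := n)).permCongr σ) ⟨j, h1⟩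
  rw [h1] at h2
  have h3 : restrictLast n σ i = j := Option.some_injective _ h2
  rw [h3, hj]

lemma liftLast_mul_last (n : ℕ) (π : Equiv.Perm (Fin n)) (σ : Equiv.Perm (Fin (n + 1))) :
    (liftLast n π * σ) (Fin.last n) = Fin.last n ↔ σ (Fin.last n) = Fin.last n := by
  constructor
  · intro h
    have hl := liftLast_last n π
    simp only [Equiv.Perm.mul_apply] at h
    exact (liftLast n π).injective (h.trans hl.symm)
  · intro h
    simp [Equiv.Perm.mul_apply, h, liftLast_last]

lemma mul_liftLast_last (n : ℕ) (π : Equiv.Perm (Fin n)) (σ : Equiv.Perm (Fin (n + 1))) :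
    (σ * liftLast n π) (Fin.last n) = Fin.last n ↔ σ (Fin.last n) = Fin.last n := by
  simp [Equiv.Perm.mul_apply, liftLast_last]

lemma restrictLast_liftLast_mul (n : ℕ) (π : Equiv.Perm (Fin n)) (σ : Equiv.Perm (Fin (n + 1)))
    (hσ : σ (Fin.last n) = Fin.last n) :
    restrictLast n (liftLast n π * σ) = π * restrictLast n σ := by
  refine Equiv.ext fun i => Fin.castSucc_injective n ?_
  rw [restrictLast_castSucc n _ ((liftLast_mul_last n π σ).2 hσ)]
  simp only [Equiv.Perm.mul_apply]
  rw [← restrictLast_castSucc n σ hσ, liftLast_castSucc]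

lemma restrictLast_mul_liftLast (n : ℕ) (π : Equiv.Perm (Fin n)) (σ : Equiv.Perm (Fin (n + 1)))
    (hσ : σ (Fin.last n) = Fin.last n) :
    restrictLast n (σ * liftLast n π) = restrictLast n σ * π := by
  refine Equiv.ext fun i => Fin.castSucc_injective n ?_
  rw [restrictLast_castSucc n _ ((mul_liftLast_last n π σ).2 hσ)]
  simp only [Equiv.Perm.mul_apply]
  rw [liftLast_castSucc, restrictLast_castSucc n σ hσ]

lemma Emap_single (n : ℕ) (σ : Equiv.Perm (Fin (n + 1))) (c : ℚ) :
    Emap n (MonoidAlgebra.single σ c) =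
      if σ (Fin.last n) = Fin.last n then MonoidAlgebra.single (restrictLast n σ) c else 0 := by
  rw [Emap]
  simp only [LinearMap.comp_apply, LinearEquiv.coe_coe, MonoidAlgebra.coeffLinearEquiv_apply,
    MonoidAlgebra.coeff_single]
  erw [Finsupp.lsum_single]
  split <;> rfl

lemma Emap_left (n : ℕ) (π : Equiv.Perm (Fin n)) (a : QSn (n + 1)) :
    Emap n (MonoidAlgebra.single (liftLast n π) (1 : ℚ) * a) =
      MonoidAlgebra.single π (1 : ℚ) * Emap n a := by
  have h : (Emap n).comp (LinearMap.mulLeft ℚ (MonoidAlgebra.single (liftLast n π) (1 : ℚ)))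
      = (LinearMap.mulLeft ℚ (MonoidAlgebra.single π (1 : ℚ))).comp (Emap n) := by
    refine MonoidAlgebra.lhom_ext' fun σ => LinearMap.ext fun c => ?_
    simp only [LinearMap.comp_apply, MonoidAlgebra.lsingle_apply, LinearMap.mulLeft_apply]
    rw [MonoidAlgebra.single_mul_single, one_mul, Emap_single, Emap_single]
    by_cases hσ : σ (Fin.last n) = Fin.last n
    · rw [if_pos hσ, if_pos ((liftLast_mul_last n π σ).2 hσ),
        restrictLast_liftLast_mul n π σ hσ, MonoidAlgebra.single_mul_single, one_mul]
    · rw [if_neg hσ, if_neg (fun hc => hσ ((liftLast_mul_last n π σ).1 hc)), mul_zero]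
  exact LinearMap.congr_fun h a

lemma Emap_right (n : ℕ) (π : Equiv.Perm (Fin n)) (a : QSn (n + 1)) :
    Emap n (a * MonoidAlgebra.single (liftLast n π) (1 : ℚ)) =
      Emap n a * MonoidAlgebra.single π (1 : ℚ) := by
  have h : (Emap n).comp (LinearMap.mulRight ℚ (MonoidAlgebra.single (liftLast n π) (1 : ℚ)))
      = (LinearMap.mulRight ℚ (MonoidAlgebra.single π (1 : ℚ))).comp (Emap n) := by
    refine MonoidAlgebra.lhom_ext' fun σ => LinearMap.ext fun c => ?_
    simp only [LinearMap.comp_apply, MonoidAlgebra.lsingle_apply, LinearMap.mulRight_apply]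
    rw [MonoidAlgebra.single_mul_single, mul_one, Emap_single, Emap_single]
    by_cases hσ : σ (Fin.last n) = Fin.last n
    · rw [if_pos hσ, if_pos ((mul_liftLast_last n π σ).2 hσ),
        restrictLast_mul_liftLast n π σ hσ, MonoidAlgebra.single_mul_single, mul_one]
    · rw [if_neg hσ, if_neg (fun hc => hσ ((mul_liftLast_last n π σ).1 hc)), zero_mul]
  exact LinearMap.congr_fun h a

lemma liftLast_commute_XJM (n : ℕ) (π : Equiv.Perm (Fin n)) :
    Commute (MonoidAlgebra.single (liftLast n π) (1 : ℚ)) (XJM n) := by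
  unfold Commute SemiconjBy
  simp only [XJM, MonoidAlgebra.of_apply, Finset.mul_sum, Finset.sum_mul,
    MonoidAlgebra.single_mul_single, one_mul, mul_one]
  rw [← Equiv.sum_comp π (fun j => MonoidAlgebra.single
    (Equiv.swap j.castSucc (Fin.last n) * liftLast n π) (1 : ℚ))]
  refine Finset.sum_congr rfl fun j _ => ?_
  congr 1
  rw [Equiv.mul_swap_eq_swap_mul, liftLast_castSucc, liftLast_last]

/-- `M_n^r = E(X_{n+1}^r)` is central in `ℚ[S_n]`. -/
theorem Mnr_central (n r : ℕ) :
    Emap n (XJM n ^ r) ∈ Subalgebra.center ℚ (QSn n) := by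
  rw [Subalgebra.mem_center_iff]
  set M := Emap n (XJM n ^ r) with hM
  have key : ∀ π : Equiv.Perm (Fin n),
      MonoidAlgebra.single π (1:ℚ) * M = M * MonoidAlgebra.single π (1:ℚ) := by
    intro π
    rw [hM, ← Emap_left, ← Emap_right]
    congr 1
    exact ((liftLast_commute_XJM n π).pow_right r).eq
  have h : LinearMap.mulRight ℚ M = LinearMap.mulLeft ℚ M := by
    refine MonoidAlgebra.lhom_ext' fun π => LinearMap.ext fun c => ?_
    simp only [LinearMap.comp_apply, MonoidAlgebra.lsingle_apply, LinearMap.mulRight_apply,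
      LinearMap.mulLeft_apply]
    have hs : (MonoidAlgebra.single π c : QSn n)
        = c • MonoidAlgebra.single π (1:ℚ) := by
      rw [MonoidAlgebra.smul_single', mul_one]
    rw [hs, smul_mul_assoc, mul_smul_comm, key]
  intro b
  have := LinearMap.congr_fun h b
  simpa using this
end
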